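/- Let u, v be natural numbers with u, v ≥ 3 and 1/u + 1/v < 1/2, and set w = u. Then the real symmetric matrix b(u,v,u) has exactly three positive eigenvalues and exactly one negative eigenvalue (counted with multiplicity); equivalently, the quadratic form x ↦ xᵀ b(u,v,u) x on ℝ⁴ has signature (+,+,+,−). -/

import Mathlib

open Real Matrix

/-- The Coxeter–Schläfli matrix `b(u,v,w)` of the orthoscheme. -/
noncomputable def CSMatrix (u v w : ℕ) : Matrix (Fin 4) (Fin 4) ℝ :=
  !![1, -Real.cos (Real.pi / u), 0, 0;
     -Real.cos (Real.pi / u), 1, -Real.cos (Real.pi / v), 0;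
     0, -Real.cos (Real.pi / v), 1, -Real.cos (Real.pi / w);
     0, 0, -Real.cos (Real.pi / w), 1]

/-- Spectral facts: the sum, sum of squares, and product of the eigenvalues of a
Hermitian real matrix equal the trace, the trace of the square, and the determinant. -/
lemma spectral_facts (A : Matrix (Fin 4) (Fin 4) ℝ) (hA : A.IsHermitian) :
    ∑ i, hA.eigenvalues i = A.trace ∧ ∑ i, (hA.eigenvalues i)^2 = (A*A).trace ∧
    ∏ i, hA.eigenvalues i = A.det := by
  have hU : star (hA.eigenvectorUnitary : Matrix (Fin 4) (Fin 4) ℝ) * hA.eigenvectorUnitary = 1 :=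
    (Matrix.mem_unitaryGroup_iff').mp (hA.eigenvectorUnitary).2
  have h := hA.spectral_theorem
  rw [Unitary.conjStarAlgAut_apply] at h
  set U := (hA.eigenvectorUnitary : Matrix (Fin 4) (Fin 4) ℝ) with hUdef
  set D := Matrix.diagonal ((RCLike.ofReal : ℝ → ℝ) ∘ hA.eigenvalues) with hD
  refine ⟨?_, ?_, ?_⟩
  · conv_rhs => rw [h]
    rw [Matrix.trace_mul_cycle, hU, one_mul, hD, Matrix.trace_diagonal]
    simp
  · conv_rhs => rw [h]
    rw [show U * D * star U * (U * D * star U) = U * (D * (star U * U) * D) * star U by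
        noncomm_ring, hU, mul_one, Matrix.trace_mul_cycle, ← mul_assoc, hU, one_mul]
    rw [hD, Matrix.diagonal_mul_diagonal, Matrix.trace_diagonal]
    simp [pow_two]
  · rw [hA.det_eq_prod_eigenvalues]
    simp

/-- Sign counting: four reals with negative product, sum `4` and sum of squares
less than `16` have exactly three positive and one negative member. -/
lemma sign_count_aux (x : Fin 4 → ℝ) (hp : ∏ i, x i < 0) (hs : ∑ i, x i = 4)
    (hq : ∑ i, x i ^ 2 < 16) :
    (Finset.univ.filter fun i => 0 < x i).card = 3 ∧
    (Finset.univ.filter fun i => x i < 0).card = 1 := by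
  rw [Fin.prod_univ_four] at hp
  rw [Fin.sum_univ_four] at hs hq
  rcases mul_neg_iff.mp hp with ⟨h012, h3⟩ | ⟨h012, h3⟩
  · rcases mul_pos_iff.mp h012 with ⟨h01, h2⟩ | ⟨h01, h2⟩
    · rcases mul_pos_iff.mp h01 with ⟨h0, h1⟩ | ⟨h0, h1⟩
      · constructor <;> (rw [Finset.card_filter, Fin.sum_univ_four]; simp [h0, h1, h2, h3, lt_asymm h0, lt_asymm h1, lt_asymm h2, lt_asymm h3])
      · exfalso; nlinarith [sq_nonneg (x 0), sq_nonneg (x 1), sq_nonneg (x 3),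
          mul_pos (show (0:ℝ) < x 2 - 4 by linarith) (show (0:ℝ) < x 2 by linarith)]
    · rcases mul_neg_iff.mp h01 with ⟨h0, h1⟩ | ⟨h0, h1⟩
      · exfalso; nlinarith [sq_nonneg (x 1), sq_nonneg (x 2), sq_nonneg (x 3),
          mul_pos (show (0:ℝ) < x 0 - 4 by linarith) (show (0:ℝ) < x 0 by linarith)]
      · exfalso; nlinarith [sq_nonneg (x 0), sq_nonneg (x 2), sq_nonneg (x 3),
          mul_pos (show (0:ℝ) < x 1 - 4 by linarith) (show (0:ℝ) < x 1 by linarith)]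
  · rcases mul_neg_iff.mp h012 with ⟨h01, h2⟩ | ⟨h01, h2⟩
    · rcases mul_pos_iff.mp h01 with ⟨h0, h1⟩ | ⟨h0, h1⟩
      · constructor <;> (rw [Finset.card_filter, Fin.sum_univ_four]; simp [h0, h1, h2, h3, lt_asymm h0, lt_asymm h1, lt_asymm h2, lt_asymm h3])
      · exfalso; nlinarith [sq_nonneg (x 0), sq_nonneg (x 1), sq_nonneg (x 2),
          mul_pos (show (0:ℝ) < x 3 - 4 by linarith) (show (0:ℝ) < x 3 by linarith)]
    · rcases mul_neg_iff.mp h01 with ⟨h0, h1⟩ | ⟨h0, h1⟩ <;>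
        (constructor <;> (rw [Finset.card_filter, Fin.sum_univ_four]; simp [h0, h1, h2, h3, lt_asymm h0, lt_asymm h1, lt_asymm h2, lt_asymm h3]))

/-- The symmetric matrix `b(u,v,u)` has signature `(+,+,+,−)`: three positive
eigenvalues and one negative eigenvalue, counted with multiplicity. -/
theorem CSMatrix_signature (u v : ℕ) (hu : 3 ≤ u) (hv : 3 ≤ v)
    (huv : (1 : ℝ) / u + 1 / v < 1 / 2)
    (hb : (CSMatrix u v u).IsHermitian) :
    (Finset.univ.filter fun i => 0 < hb.eigenvalues i).card = 3 ∧
    (Finset.univ.filter fun i => hb.eigenvalues i < 0).card = 1 := by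
  obtain ⟨hsum, hsq, hprod⟩ := spectral_facts _ hb
  set a := Real.cos (Real.pi / u) with ha
  set c := Real.cos (Real.pi / v) with hc
  have hu3 : (3:ℝ) ≤ (u:ℝ) := by exact_mod_cast hu
  have hv3 : (3:ℝ) ≤ (v:ℝ) := by exact_mod_cast hv
  have hupos : (0:ℝ) < u := by linarith
  have hvpos : (0:ℝ) < v := by linarith
  have hpiu0 : 0 < Real.pi / u := div_pos Real.pi_pos hupos
  have hpiv0 : 0 < Real.pi / v := div_pos Real.pi_pos hvpos
  have hpiu2 : Real.pi / u < Real.pi / 2 := by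
    apply div_lt_div_of_pos_left Real.pi_pos (by norm_num) (by linarith)
  have hpiv2 : Real.pi / v < Real.pi / 2 := by
    apply div_lt_div_of_pos_left Real.pi_pos (by norm_num) (by linarith)
  have ha0 : 0 < a := Real.cos_pos_of_mem_Ioo ⟨by linarith, hpiu2⟩
  have hc0 : 0 < c := Real.cos_pos_of_mem_Ioo ⟨by linarith, hpiv2⟩
  have ha1 : a < 1 := by
    have := Real.cos_lt_cos_of_nonneg_of_le_pi (le_refl 0) (by linarith [Real.pi_pos]) hpiu0
    simpa [ha] using this
  have hc1 : c < 1 := by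
    have := Real.cos_lt_cos_of_nonneg_of_le_pi (le_refl 0) (by linarith [Real.pi_pos]) hpiv0
    simpa [hc] using this
  -- the key inequality : sin (π/u) < c
  have hkey : Real.sin (Real.pi / u) < c := by
    have hlt : Real.pi / v < Real.pi / 2 - Real.pi / u := by
      have := mul_lt_mul_of_pos_left huv Real.pi_pos
      have h1 : Real.pi * ((1:ℝ)/u + 1/v) = Real.pi / u + Real.pi / v := by ring
      have h2 : Real.pi * ((1:ℝ)/2) = Real.pi / 2 := by ring
      rw [h1, h2] at this
      linarith
    have := Real.cos_lt_cos_of_nonneg_of_le_pi (le_of_lt hpiv0)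
      (by linarith [Real.pi_pos]) hlt
    rwa [Real.cos_pi_div_two_sub] at this
  have hs0 : 0 < Real.sin (Real.pi / u) :=
    Real.sin_pos_of_pos_of_lt_pi hpiu0 (by linarith [Real.pi_pos])
  have hs1 : Real.sin (Real.pi / u) ≤ 1 := Real.sin_le_one _
  have hsin_sq : Real.sin (Real.pi / u) ^ 2 = 1 - a ^ 2 := Real.sin_sq _
  -- trace
  have htrace : (CSMatrix u v u).trace = 4 := by
    simp [CSMatrix, Matrix.trace, Fin.sum_univ_four, Matrix.diag]
    norm_num
  -- trace of square
  have htrsq : (CSMatrix u v u * CSMatrix u v u).trace = 4 + 4 * a^2 + 2 * c^2 := by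
    simp [CSMatrix, Matrix.trace, Matrix.mul_apply, Fin.sum_univ_four, Matrix.diag, ha, hc]
    ring
  -- determinant
  have hdet : (CSMatrix u v u).det = (1 - a^2)^2 - c^2 := by
    simp [CSMatrix, Matrix.det_succ_row_zero, Fin.sum_univ_succ, Fin.succAbove, ha, hc]
    ring
  -- apply the counting lemma
  apply sign_count_aux
  · rw [hprod, hdet, ← hsin_sq]
    have h1 : Real.sin (Real.pi / u) ^ 2 < c := by nlinarith
    nlinarith [sq_nonneg (Real.sin (Real.pi / u))]
  · rw [hsum, htrace]
  · rw [hsq, htrsq]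
    have h2 : a^2 < 1 := pow_lt_one₀ (le_of_lt ha0) ha1 (by norm_num)
    have h3 : c^2 < 1 := pow_lt_one₀ (le_of_lt hc0) hc1 (by norm_num)
    linarith
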